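/- Let P be a finite graded shellable poset and let a ⪯ b be elements of P. Then each of the induced subposets [a,b] = {z : a ⪯ z ⪯ b}, [a,b) = {z : a ⪯ z ≺ b}, (a,b] = {z : a ≺ z ⪯ b}, and (a,b) = {z : a ≺ z ≺ b} is shellable. -/

import Mathlib

variable {α : Type*}

/-- The closed interval of the subposet `S` (for the order relation `le`)
between `a` and `b`. -/
def orderInterval (le : α → α → Prop) (S : Set α) (a b : α) : Set α :=
  {z | z ∈ S ∧ le a z ∧ le z b}
/-- A finset is a chain of the subposet `S` for the order relation `le`. -/
def IsChainFinsetIn (le : α → α → Prop) (S : Set α) (C : Finset α) : Prop :=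
  (↑C : Set α) ⊆ S ∧ ∀ u ∈ C, ∀ v ∈ C, u ≠ v → (le u v ∨ le v u)

/-- A maximal chain of the subposet `S`: a chain of `S` which is not properly
contained in any other chain of `S`. -/
def IsMaxChainFinsetIn (le : α → α → Prop) (S : Set α) (C : Finset α) : Prop :=
  IsChainFinsetIn le S C ∧
    ∀ C' : Finset α, IsChainFinsetIn le S C' → C ⊆ C' → C' = C

/-- The subposet `S` is graded: in every closed interval all maximal chains
have the same length (cardinality). -/
def IsGradedIn (le : α → α → Prop) (S : Set α) : Prop :=
  ∀ a ∈ S, ∀ b ∈ S, le a b → ∀ C₁ C₂ : Finset α,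
    IsMaxChainFinsetIn le (orderInterval le S a b) C₁ →
    IsMaxChainFinsetIn le (orderInterval le S a b) C₂ → C₁.card = C₂.card

/-- `r` is a shelling order on the maximal chains of the subposet `S`: a strict
linear order on maximal chains such that whenever `m₁ < m₂`, there exist a maximal
chain `m₃ < m₂` and an element `x ∈ m₂` with `m₁ ∩ m₂ ⊆ m₃ ∩ m₂ = m₂ \ {x}`. -/
def IsShellingOrder [DecidableEq α] (le : α → α → Prop) (S : Set α)
    (r : Finset α → Finset α → Prop) : Prop :=
  (∀ C, IsMaxChainFinsetIn le S C → ¬r C C) ∧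
  (∀ C₁ C₂ C₃, IsMaxChainFinsetIn le S C₁ → IsMaxChainFinsetIn le S C₂ →
    IsMaxChainFinsetIn le S C₃ → r C₁ C₂ → r C₂ C₃ → r C₁ C₃) ∧
  (∀ C₁ C₂, IsMaxChainFinsetIn le S C₁ → IsMaxChainFinsetIn le S C₂ → C₁ ≠ C₂ →
    r C₁ C₂ ∨ r C₂ C₁) ∧
  (∀ m₁ m₂, IsMaxChainFinsetIn le S m₁ → IsMaxChainFinsetIn le S m₂ → r m₁ m₂ →
    ∃ m₃, IsMaxChainFinsetIn le S m₃ ∧ r m₃ m₂ ∧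
      ∃ x ∈ m₂, m₁ ∩ m₂ ⊆ m₃ ∩ m₂ ∧ m₃ ∩ m₂ = m₂.erase x)

/-- The subposet `S` is shellable. -/
def IsShellableIn [DecidableEq α] (le : α → α → Prop) (S : Set α) : Prop :=
  ∃ r : Finset α → Finset α → Prop, IsShellingOrder le S r

attribute [local instance] Classical.propDecidable

section Aux
variable [PartialOrder α] [Fintype α] [DecidableEq α]

/-- every chain extends to a maximal chain -/
lemma exists_maxChain_ext (S : Set α) (c : Finset α)
    (hc : IsChainFinsetIn (· ≤ ·) S c) :
    ∃ m, IsMaxChainFinsetIn (· ≤ ·) S m ∧ c ⊆ m := by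
  classical
  set s : Finset (Finset α) :=
    Finset.univ.filter (fun C => IsChainFinsetIn (· ≤ ·) S C ∧ c ⊆ C) with hs
  have hcs : c ∈ s := by simp [hs, hc]
  obtain ⟨m, hm, hmax⟩ := s.exists_max_image Finset.card ⟨c, hcs⟩
  simp only [hs, Finset.mem_filter, Finset.mem_univ, true_and] at hm
  refine ⟨m, ⟨hm.1, ?_⟩, hm.2⟩
  intro C' hC' hsub
  have hC's : C' ∈ s := by
    simp only [hs, Finset.mem_filter, Finset.mem_univ, true_and]
    exact ⟨hC', hm.2.trans hsub⟩
  exact (Finset.eq_of_subset_of_card_le hsub (hmax C' hC's)).symm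

/-- restriction of a chain extending a maximal chain of `S` back to `S` -/
lemma filter_eq_of_maxChain (S : Set α) [DecidablePred (· ∈ S)] (c m : Finset α)
    (hc : IsMaxChainFinsetIn (· ≤ ·) S c)
    (hm : ∀ u ∈ m, ∀ v ∈ m, u ≠ v → u ≤ v ∨ v ≤ u)
    (hsub : c ⊆ m) :
    m.filter (· ∈ S) = c := by
  apply hc.2
  · refine ⟨?_, ?_⟩
    · intro z hz
      simp only [Finset.coe_filter, Set.mem_setOf_eq] at hz
      exact hz.2
    · intro u hu v hv huv
      exact hm u (Finset.mem_of_mem_filter _ hu) v (Finset.mem_of_mem_filter _ hv) huv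
  · intro z hz
    simp only [Finset.mem_filter]
    exact ⟨hsub hz, hc.1.1 hz⟩

/-- a maximal chain of `Icc a b` contains `a` and `b` -/
lemma endpoints_mem_maxChain {a b : α} (hab : a ≤ b) (c : Finset α)
    (hc : IsMaxChainFinsetIn (· ≤ ·) (Set.Icc a b) c) : a ∈ c ∧ b ∈ c := by
  have key : ∀ t : α, t ∈ Set.Icc a b → (∀ z ∈ Set.Icc a b, z ≤ t ∨ t ≤ z) → t ∈ c := by
    intro t ht hcomp
    have hchain : IsChainFinsetIn (· ≤ ·) (Set.Icc a b) (insert t c) := by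
      refine ⟨?_, ?_⟩
      · intro z hz
        simp only [Finset.coe_insert, Set.mem_insert_iff] at hz
        rcases hz with rfl | hz
        · exact ht
        · exact hc.1.1 hz
      · intro u hu v hv huv
        simp only [Finset.mem_insert] at hu hv
        rcases hu with rfl | hu
        · rcases hv with rfl | hv
          · exact absurd rfl huv
          · exact (hcomp v (hc.1.1 hv)).symm
        · rcases hv with rfl | hv
          · exact hcomp u (hc.1.1 hu)
          · exact hc.1.2 u hu v hv huv
    have := hc.2 _ hchain (Finset.subset_insert t c)
    rw [← this]
    exact Finset.mem_insert_self t c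
  constructor
  · exact key a ⟨le_refl a, hab⟩ (fun z hz => Or.inr hz.1)
  · exact key b ⟨hab, le_refl b⟩ (fun z hz => Or.inl hz.2)

/-- restriction of a maximal chain of the whole poset through `a` and `b`
is a maximal chain of `Icc a b`. -/
lemma filter_maxChain_Icc {a b : α} [DecidablePred (· ∈ Set.Icc a b)] (m : Finset α)
    (hm : IsMaxChainFinsetIn (· ≤ ·) (Set.univ : Set α) m)
    (ha : a ∈ m) (hb : b ∈ m) :
    IsMaxChainFinsetIn (· ≤ ·) (Set.Icc a b) (m.filter (· ∈ Set.Icc a b)) := by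
  constructor
  · refine ⟨?_, ?_⟩
    · intro z hz
      simp only [Finset.coe_filter, Set.mem_setOf_eq] at hz
      exact hz.2
    · intro u hu v hv huv
      exact hm.1.2 u (Finset.mem_of_mem_filter _ hu) v (Finset.mem_of_mem_filter _ hv) huv
  · intro C' hC' hsub
    -- m ∪ C' is a chain in univ
    have hchain : IsChainFinsetIn (· ≤ ·) (Set.univ : Set α) (m ∪ C') := by
      refine ⟨fun z _ => Set.mem_univ z, ?_⟩
      have comp : ∀ w ∈ m, ∀ z ∈ C', w ≠ z → w ≤ z ∨ z ≤ w := by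
        intro w hw z hz hwz
        by_cases hwI : w ∈ Set.Icc a b
        · have : w ∈ C' := hsub (Finset.mem_filter.2 ⟨hw, hwI⟩)
          exact hC'.2 w this z hz hwz
        · have hzI : z ∈ Set.Icc a b := hC'.1 hz
          have hwa : w ≤ a ∨ a ≤ w := by
            rcases eq_or_ne w a with rfl | h
            · exact Or.inl le_rfl
            · exact hm.1.2 w hw a ha h
          have hwb : w ≤ b ∨ b ≤ w := by
            rcases eq_or_ne w b with rfl | h
            · exact Or.inl le_rfl
            · exact hm.1.2 w hw b hb h
          rcases hwa with hwa | hwa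
          · rcases eq_or_ne w a with rfl | hne
            · exact absurd hzI.1 (fun h => hwI ⟨le_rfl, le_trans h hzI.2⟩)
            · exact Or.inl (le_trans hwa hzI.1)
          · rcases hwb with hwb | hwb
            · exact absurd ⟨hwa, hwb⟩ hwI
            · rcases eq_or_ne w b with rfl | hne
              · exact Or.inr hzI.2
              · exact Or.inr (le_trans hzI.2 hwb)
      intro u hu v hv huv
      simp only [Finset.mem_union] at hu hv
      rcases hu with hu | hu
      · rcases hv with hv | hv
        · exact hm.1.2 u hu v hv huv
        · exact comp u hu v hv huv
      · rcases hv with hv | hv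
        · exact (comp v hv u hu (Ne.symm huv)).symm
        · exact hC'.2 u hu v hv huv
    have hm' := hm.2 _ hchain Finset.subset_union_left
    have hC'm : C' ⊆ m := by
      intro z hz
      have : z ∈ m ∪ C' := Finset.mem_union_right _ hz
      rwa [hm'] at this
    apply Finset.Subset.antisymm _ hsub
    intro z hz
    exact Finset.mem_filter.2 ⟨hC'm hz, hC'.1 hz⟩

/-- existence of an `r`-minimum in a finite collection -/
lemma exists_rmin (r : Finset α → Finset α → Prop) (P : Finset α → Prop)
    (htrans : ∀ C₁ C₂ C₃, P C₁ → P C₂ → P C₃ → r C₁ C₂ → r C₂ C₃ → r C₁ C₃)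
    (htot : ∀ C₁ C₂, P C₁ → P C₂ → C₁ ≠ C₂ → r C₁ C₂ ∨ r C₂ C₁) :
    ∀ s : Finset (Finset α), (∀ m ∈ s, P m) → s.Nonempty →
      ∃ m ∈ s, ∀ m' ∈ s, m' ≠ m → r m m' := by
  intro s
  induction s using Finset.induction_on with
  | empty => intro _ h; exact absurd h (by simp)
  | @insert A s hA ih =>
    intro hP _
    rcases s.eq_empty_or_nonempty with rfl | hne
    · refine ⟨A, Finset.mem_insert_self _ _, ?_⟩
      intro m' hm' hne'
      simp only [Finset.mem_insert, Finset.notMem_empty, or_false] at hm'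
      exact absurd hm' hne'
    · obtain ⟨m, hms, hmin⟩ := ih (fun x hx => hP x (Finset.mem_insert_of_mem hx)) hne
      have hPA : P A := hP A (Finset.mem_insert_self _ _)
      have hPm : P m := hP m (Finset.mem_insert_of_mem hms)
      rcases eq_or_ne A m with hAe | hAm
      · refine ⟨A, Finset.mem_insert_self _ _, ?_⟩
        intro m' hm' hne'
        rcases Finset.mem_insert.1 hm' with rfl | hm'
        · exact absurd rfl hne'
        · rw [hAe]; exact hmin m' hm' (by rw [← hAe]; exact hne')
      · rcases htot A m hPA hPm hAm with h | h
        · refine ⟨A, Finset.mem_insert_self _ _, ?_⟩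
          intro m' hm' hne'
          rcases Finset.mem_insert.1 hm' with rfl | hm'
          · exact absurd rfl hne'
          · rcases eq_or_ne m' m with rfl | hne''
            · exact h
            · exact htrans A m m' hPA hPm (hP m' (Finset.mem_insert_of_mem hm')) h
                (hmin m' hm' hne'')
        · refine ⟨m, Finset.mem_insert_of_mem hms, ?_⟩
          intro m' hm' hne'
          rcases Finset.mem_insert.1 hm' with rfl | hm'
          · exact h
          · exact hmin m' hm' hne'

/-- The closed interval of a shellable finite poset is shellable. -/
lemma icc_shellable (hshell : IsShellableIn (· ≤ ·) (Set.univ : Set α))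
    (a b : α) (hab : a ≤ b) :
    IsShellableIn (· ≤ ·) (Set.Icc a b) := by
  obtain ⟨r, hirr, htrans, htot, hstep⟩ := hshell
  -- minimal extensions
  have hminex : ∀ c : Finset α, IsMaxChainFinsetIn (· ≤ ·) (Set.Icc a b) c →
      ∃ m, (IsMaxChainFinsetIn (· ≤ ·) (Set.univ : Set α) m ∧ c ⊆ m) ∧
        ∀ m', IsMaxChainFinsetIn (· ≤ ·) (Set.univ : Set α) m' → c ⊆ m' → m' ≠ m →
          r m m' := by
    intro c hc
    have hcu : IsChainFinsetIn (· ≤ ·) (Set.univ : Set α) c :=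
      ⟨fun z _ => Set.mem_univ z, hc.1.2⟩
    set s : Finset (Finset α) :=
      Finset.univ.filter
        (fun m => IsMaxChainFinsetIn (· ≤ ·) (Set.univ : Set α) m ∧ c ⊆ m) with hs
    have hsne : s.Nonempty := by
      obtain ⟨m, hm, hcm⟩ := exists_maxChain_ext Set.univ c hcu
      exact ⟨m, by simp [hs, hm, hcm]⟩
    have hsP : ∀ m ∈ s, IsMaxChainFinsetIn (· ≤ ·) (Set.univ : Set α) m := by
      intro m hm
      simp only [hs, Finset.mem_filter, Finset.mem_univ, true_and] at hm
      exact hm.1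
    obtain ⟨m, hms, hmin⟩ := exists_rmin r _ htrans htot s hsP hsne
    simp only [hs, Finset.mem_filter, Finset.mem_univ, true_and] at hms
    refine ⟨m, hms, ?_⟩
    intro m' hm' hcm' hne
    exact hmin m' (by simp [hs, hm', hcm']) hne
  choose! f hf hfmin using hminex
  -- f is injective on maximal chains of the interval
  have hres : ∀ c : Finset α, IsMaxChainFinsetIn (· ≤ ·) (Set.Icc a b) c →
      (f c).filter (· ∈ Set.Icc a b) = c := by
    intro c hc
    exact filter_eq_of_maxChain _ _ _ hc ((hf c hc).1.1.2) (hf c hc).2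
  refine ⟨fun c c' => r (f c) (f c'), ?_, ?_, ?_, ?_⟩
  · intro C hC
    exact hirr (f C) (hf C hC).1
  · intro C₁ C₂ C₃ h₁ h₂ h₃
    exact htrans _ _ _ (hf C₁ h₁).1 (hf C₂ h₂).1 (hf C₃ h₃).1
  · intro C₁ C₂ h₁ h₂ hne
    apply htot _ _ (hf C₁ h₁).1 (hf C₂ h₂).1
    intro heq
    apply hne
    rw [← hres C₁ h₁, ← hres C₂ h₂, heq]
  · intro c₁ c₂ h₁ h₂ hr
    obtain ⟨m₃, hm₃, hr₃, x, hxm₂, hsub, heq⟩ :=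
      hstep (f c₁) (f c₂) (hf c₁ h₁).1 (hf c₂ h₂).1 hr
    have ha₁ := (endpoints_mem_maxChain hab c₁ h₁)
    have ha₂ := (endpoints_mem_maxChain hab c₂ h₂)
    -- a and b are in m₃ and differ from x
    have haint : a ∈ f c₁ ∩ f c₂ :=
      Finset.mem_inter.2 ⟨(hf c₁ h₁).2 ha₁.1, (hf c₂ h₂).2 ha₂.1⟩
    have hbint : b ∈ f c₁ ∩ f c₂ :=
      Finset.mem_inter.2 ⟨(hf c₁ h₁).2 ha₁.2, (hf c₂ h₂).2 ha₂.2⟩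
    have ham₃ : a ∈ m₃ := Finset.mem_inter.1 (hsub haint) |>.1
    have hbm₃ : b ∈ m₃ := Finset.mem_inter.1 (hsub hbint) |>.1
    have hm₃ne : m₃ ≠ f c₂ := by
      intro h
      rw [h, Finset.inter_self] at heq
      have : x ∈ (f c₂).erase x := heq ▸ hxm₂
      exact (Finset.notMem_erase x _) this
    -- x belongs to c₂
    have hxc₂ : x ∈ c₂ := by
      by_contra hx
      have hc₂m₃ : c₂ ⊆ m₃ := by
        intro z hz
        have hzm₂ : z ∈ f c₂ := (hf c₂ h₂).2 hz
        have : z ∈ m₃ ∩ f c₂ := by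
          rw [heq]
          exact Finset.mem_erase.2 ⟨fun h => hx (h ▸ hz), hzm₂⟩
        exact (Finset.mem_inter.1 this).1
      have := hfmin c₂ h₂ m₃ hm₃ hc₂m₃ hm₃ne
      exact hirr (f c₂) (hf c₂ h₂).1
        (htrans _ _ _ (hf c₂ h₂).1 hm₃ (hf c₂ h₂).1 this hr₃)
    -- the new chain in the interval
    set c₃ : Finset α := m₃.filter (· ∈ Set.Icc a b) with hc₃
    have hmax₃ : IsMaxChainFinsetIn (· ≤ ·) (Set.Icc a b) c₃ :=
      filter_maxChain_Icc m₃ hm₃ ham₃ hbm₃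
    refine ⟨c₃, hmax₃, ?_, x, hxc₂, ?_, ?_⟩
    · -- r (f c₃) (f c₂)
      show r (f c₃) (f c₂)
      have h3 := hfmin c₃ hmax₃ m₃ hm₃ (Finset.filter_subset _ _)
      rcases eq_or_ne m₃ (f c₃) with hEq | hne'
      · rw [← hEq]; exact hr₃
      · exact htrans _ _ _ (hf c₃ hmax₃).1 hm₃ (hf c₂ h₂).1 (h3 hne') hr₃
    · -- c₁ ∩ c₂ ⊆ c₃ ∩ c₂
      intro z hz
      obtain ⟨hz₁, hz₂⟩ := Finset.mem_inter.1 hz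
      have hzm : z ∈ f c₁ ∩ f c₂ :=
        Finset.mem_inter.2 ⟨(hf c₁ h₁).2 hz₁, (hf c₂ h₂).2 hz₂⟩
      have hzm₃ : z ∈ m₃ := (Finset.mem_inter.1 (hsub hzm)).1
      exact Finset.mem_inter.2
        ⟨Finset.mem_filter.2 ⟨hzm₃, h₂.1.1 hz₂⟩, hz₂⟩
    · -- c₃ ∩ c₂ = c₂.erase x
      ext z
      simp only [hc₃, Finset.mem_inter, Finset.mem_filter, Finset.mem_erase]
      constructor
      · rintro ⟨⟨hzm₃, _⟩, hzc₂⟩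
        have : z ∈ m₃ ∩ f c₂ := Finset.mem_inter.2 ⟨hzm₃, (hf c₂ h₂).2 hzc₂⟩
        rw [heq] at this
        exact ⟨(Finset.mem_erase.1 this).1, hzc₂⟩
      · rintro ⟨hzx, hzc₂⟩
        have : z ∈ m₃ ∩ f c₂ := by
          rw [heq]
          exact Finset.mem_erase.2 ⟨hzx, (hf c₂ h₂).2 hzc₂⟩
        exact ⟨⟨(Finset.mem_inter.1 this).1, h₂.1.1 hzc₂⟩, hzc₂⟩

/-- removing an element comparable with everything preserves shellability -/
lemma shellable_remove {S : Set α} {t : α} (ht : t ∈ S)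
    (hcomp : ∀ z ∈ S, z ≤ t ∨ t ≤ z)
    (hshell : IsShellableIn (· ≤ ·) S) :
    IsShellableIn (· ≤ ·) (S \ {t}) := by
  obtain ⟨r, hirr, htrans, htot, hstep⟩ := hshell
  -- every maximal chain of S contains t
  have htmem : ∀ m : Finset α, IsMaxChainFinsetIn (· ≤ ·) S m → t ∈ m := by
    intro m hm
    have hchain : IsChainFinsetIn (· ≤ ·) S (insert t m) := by
      refine ⟨?_, ?_⟩
      · intro z hz
        simp only [Finset.coe_insert, Set.mem_insert_iff] at hz
        rcases hz with rfl | hz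
        · exact ht
        · exact hm.1.1 hz
      · intro u hu v hv huv
        simp only [Finset.mem_insert] at hu hv
        rcases hu with rfl | hu
        · rcases hv with rfl | hv
          · exact absurd rfl huv
          · exact (hcomp v (hm.1.1 hv)).symm
        · rcases hv with rfl | hv
          · exact hcomp u (hm.1.1 hu)
          · exact hm.1.2 u hu v hv huv
    have := hm.2 _ hchain (Finset.subset_insert t m)
    rw [← this]; exact Finset.mem_insert_self t m
  -- inserting t into a maximal chain of S \ {t}
  have hins : ∀ c : Finset α, IsMaxChainFinsetIn (· ≤ ·) (S \ {t}) c →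
      IsMaxChainFinsetIn (· ≤ ·) S (insert t c) := by
    intro c hc
    have htc : t ∉ c := fun h => (hc.1.1 h).2 rfl
    constructor
    · refine ⟨?_, ?_⟩
      · intro z hz
        simp only [Finset.coe_insert, Set.mem_insert_iff] at hz
        rcases hz with rfl | hz
        · exact ht
        · exact (hc.1.1 hz).1
      · intro u hu v hv huv
        simp only [Finset.mem_insert] at hu hv
        rcases hu with rfl | hu
        · rcases hv with rfl | hv
          · exact absurd rfl huv
          · exact (hcomp v (hc.1.1 hv).1).symm
        · rcases hv with rfl | hv
          · exact hcomp u (hc.1.1 hu).1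
          · exact hc.1.2 u hu v hv huv
    · intro C' hC' hsub
      have hchain : IsChainFinsetIn (· ≤ ·) (S \ {t}) (C'.erase t) := by
        refine ⟨?_, ?_⟩
        · intro z hz
          simp only [Finset.coe_erase, Set.mem_diff, Set.mem_singleton_iff] at hz ⊢
          exact ⟨hC'.1 hz.1, hz.2⟩
        · intro u hu v hv huv
          exact hC'.2 u (Finset.mem_of_mem_erase hu) v (Finset.mem_of_mem_erase hv) huv
      have hcsub : c ⊆ C'.erase t := by
        intro z hz
        exact Finset.mem_erase.2 ⟨fun h => htc (h ▸ hz),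
          hsub (Finset.mem_insert_of_mem hz)⟩
      have hce := hc.2 _ hchain hcsub
      apply Finset.Subset.antisymm _ hsub
      intro z hz
      rcases eq_or_ne z t with rfl | hzt
      · exact Finset.mem_insert_self _ _
      · have : z ∈ C'.erase t := Finset.mem_erase.2 ⟨hzt, hz⟩
        rw [hce] at this
        exact Finset.mem_insert_of_mem this
  -- erasing t from a maximal chain of S
  have hers : ∀ m : Finset α, IsMaxChainFinsetIn (· ≤ ·) S m →
      IsMaxChainFinsetIn (· ≤ ·) (S \ {t}) (m.erase t) := by
    intro m hm
    constructor
    · refine ⟨?_, ?_⟩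
      · intro z hz
        simp only [Finset.coe_erase, Set.mem_diff, Set.mem_singleton_iff] at hz ⊢
        exact ⟨hm.1.1 hz.1, hz.2⟩
      · intro u hu v hv huv
        exact hm.1.2 u (Finset.mem_of_mem_erase hu) v (Finset.mem_of_mem_erase hv) huv
    · intro C' hC' hsub
      have htC' : t ∉ C' := fun h => (hC'.1 h).2 rfl
      have hchain : IsChainFinsetIn (· ≤ ·) S (insert t C') := by
        refine ⟨?_, ?_⟩
        · intro z hz
          simp only [Finset.coe_insert, Set.mem_insert_iff] at hz
          rcases hz with rfl | hz
          · exact ht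
          · exact (hC'.1 hz).1
        · intro u hu v hv huv
          simp only [Finset.mem_insert] at hu hv
          rcases hu with rfl | hu
          · rcases hv with rfl | hv
            · exact absurd rfl huv
            · exact (hcomp v (hC'.1 hv).1).symm
          · rcases hv with rfl | hv
            · exact hcomp u (hC'.1 hu).1
            · exact hC'.2 u hu v hv huv
      have hmsub : m ⊆ insert t C' := by
        intro z hz
        rcases eq_or_ne z t with rfl | hzt
        · exact Finset.mem_insert_self _ _
        · exact Finset.mem_insert_of_mem (hsub (Finset.mem_erase.2 ⟨hzt, hz⟩))
      have := hm.2 _ hchain hmsub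
      apply Finset.Subset.antisymm _ hsub
      intro z hz
      refine Finset.mem_erase.2 ⟨fun h => htC' (h ▸ hz), ?_⟩
      rw [← this]
      exact Finset.mem_insert_of_mem hz
  have hinj : ∀ c : Finset α, IsMaxChainFinsetIn (· ≤ ·) (S \ {t}) c →
      (insert t c).erase t = c := by
    intro c hc
    exact Finset.erase_insert (fun h => ((hc.1.1 h).2 rfl))
  refine ⟨fun c c' => r (insert t c) (insert t c'), ?_, ?_, ?_, ?_⟩
  · intro C hC
    exact hirr _ (hins C hC)
  · intro C₁ C₂ C₃ h₁ h₂ h₃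
    exact htrans _ _ _ (hins C₁ h₁) (hins C₂ h₂) (hins C₃ h₃)
  · intro C₁ C₂ h₁ h₂ hne
    apply htot _ _ (hins C₁ h₁) (hins C₂ h₂)
    intro h
    exact hne (by rw [← hinj C₁ h₁, ← hinj C₂ h₂, h])
  · intro c₁ c₂ h₁ h₂ hr
    obtain ⟨m₃, hm₃, hr₃, x, hxm₂, hsub, heq⟩ :=
      hstep (insert t c₁) (insert t c₂) (hins c₁ h₁) (hins c₂ h₂) hr
    have htm₃ : t ∈ m₃ := htmem m₃ hm₃
    have htc₂ : t ∉ c₂ := fun h => ((h₂.1.1 h).2 rfl)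
    have htc₁ : t ∉ c₁ := fun h => ((h₁.1.1 h).2 rfl)
    have hxt : x ≠ t := by
      intro h
      have hmem : t ∈ m₃ ∩ insert t c₂ :=
        Finset.mem_inter.2 ⟨htm₃, Finset.mem_insert_self _ _⟩
      rw [heq] at hmem
      exact (Finset.mem_erase.1 hmem).1 h.symm
    have hxc₂ : x ∈ c₂ := (Finset.mem_insert.1 hxm₂).resolve_left hxt
    refine ⟨m₃.erase t, hers m₃ hm₃, ?_, x, hxc₂, ?_, ?_⟩
    · show r (insert t (m₃.erase t)) (insert t c₂)
      rw [Finset.insert_erase htm₃]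
      exact hr₃
    · intro z hz
      obtain ⟨hz₁, hz₂⟩ := Finset.mem_inter.1 hz
      have hzt : z ≠ t := fun h => htc₂ (h ▸ hz₂)
      have : z ∈ m₃ ∩ insert t c₂ :=
        hsub (Finset.mem_inter.2 ⟨Finset.mem_insert_of_mem hz₁,
          Finset.mem_insert_of_mem hz₂⟩)
      exact Finset.mem_inter.2
        ⟨Finset.mem_erase.2 ⟨hzt, (Finset.mem_inter.1 this).1⟩, hz₂⟩
    · ext z
      simp only [Finset.mem_inter, Finset.mem_erase]
      constructor
      · rintro ⟨⟨hzt, hzm₃⟩, hzc₂⟩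
        have : z ∈ m₃ ∩ insert t c₂ :=
          Finset.mem_inter.2 ⟨hzm₃, Finset.mem_insert_of_mem hzc₂⟩
        rw [heq] at this
        exact ⟨(Finset.mem_erase.1 this).1, hzc₂⟩
      · rintro ⟨hzx, hzc₂⟩
        have hzt : z ≠ t := fun h => htc₂ (h ▸ hzc₂)
        have : z ∈ m₃ ∩ insert t c₂ := by
          rw [heq]
          exact Finset.mem_erase.2 ⟨hzx, Finset.mem_insert_of_mem hzc₂⟩
        exact ⟨⟨hzt, (Finset.mem_inter.1 this).1⟩, hzc₂⟩

end Aux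

/-- Let `P` be a finite graded shellable poset and `a ≤ b`
elements of `P`. Then each of the induced subposets `[a,b]`, `[a,b)`, `(a,b]`
and `(a,b)` is shellable. -/
theorem intervals_of_shellable_are_shellable
    [PartialOrder α] [Fintype α] [DecidableEq α]
    (hgraded : IsGradedIn (· ≤ · : α → α → Prop) Set.univ)
    (hshell : IsShellableIn (· ≤ · : α → α → Prop) Set.univ)
    (a b : α) (hab : a ≤ b) :
    IsShellableIn (· ≤ · : α → α → Prop) (Set.Icc a b) ∧
      IsShellableIn (· ≤ · : α → α → Prop) (Set.Ico a b) ∧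
        IsShellableIn (· ≤ · : α → α → Prop) (Set.Ioc a b) ∧
          IsShellableIn (· ≤ · : α → α → Prop) (Set.Ioo a b) := by
  have hIcc : IsShellableIn (· ≤ ·) (Set.Icc a b) := icc_shellable hshell a b hab
  have hIco : IsShellableIn (· ≤ ·) (Set.Ico a b) := by
    have h := shellable_remove (S := Set.Icc a b) (t := b)
      ⟨hab, le_refl b⟩ (fun z hz => Or.inl hz.2) hIcc
    have : Set.Icc a b \ {b} = Set.Ico a b := by
      ext z
      simp only [Set.mem_diff, Set.mem_Icc, Set.mem_Ico, Set.mem_singleton_iff]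
      constructor
      · rintro ⟨⟨h1, h2⟩, h3⟩
        exact ⟨h1, lt_of_le_of_ne h2 h3⟩
      · rintro ⟨h1, h2⟩
        exact ⟨⟨h1, le_of_lt h2⟩, ne_of_lt h2⟩
    rwa [this] at h
  have hIoc : IsShellableIn (· ≤ ·) (Set.Ioc a b) := by
    have h := shellable_remove (S := Set.Icc a b) (t := a)
      ⟨le_refl a, hab⟩ (fun z hz => Or.inr hz.1) hIcc
    have : Set.Icc a b \ {a} = Set.Ioc a b := by
      ext z
      simp only [Set.mem_diff, Set.mem_Icc, Set.mem_Ioc, Set.mem_singleton_iff]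
      constructor
      · rintro ⟨⟨h1, h2⟩, h3⟩
        exact ⟨lt_of_le_of_ne h1 (Ne.symm h3), h2⟩
      · rintro ⟨h1, h2⟩
        exact ⟨⟨le_of_lt h1, h2⟩, fun h => (ne_of_gt h1) h⟩
    rwa [this] at h
  have hIoo : IsShellableIn (· ≤ ·) (Set.Ioo a b) := by
    rcases eq_or_lt_of_le hab with rfl | hlt
    · have : Set.Ioo a a = Set.Ico a a := by simp
      rwa [this]
    · have h := shellable_remove (S := Set.Ioc a b) (t := b)
        ⟨hlt, le_refl b⟩ (fun z hz => Or.inl hz.2) hIoc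
      have : Set.Ioc a b \ {b} = Set.Ioo a b := by
        ext z
        simp only [Set.mem_diff, Set.mem_Ioc, Set.mem_Ioo, Set.mem_singleton_iff]
        constructor
        · rintro ⟨⟨h1, h2⟩, h3⟩
          exact ⟨h1, lt_of_le_of_ne h2 h3⟩
        · rintro ⟨h1, h2⟩
          exact ⟨⟨h1, le_of_lt h2⟩, ne_of_lt h2⟩
      rwa [this] at h
  exact ⟨hIcc, hIco, hIoc, hIoo⟩
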